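/- Let R be a commutative ring and I = (a_1,…,a_g) an ideal with a fixed generating set. Let R(I) = ⊕_{n≥0} I^n t^n ⊆ R[t] be the Rees algebra of I, and for an integer s ≥ 1 let 𝔞 be the ideal of R(I) generated by a_1^s,…,a_g^s together with a_1^s t^s,…,a_g^s t^s. Then for every n ≥ 0, the intersection of 𝔞 with the degree-n component I^n t^n of R(I) equals I^{[s]} I^n t^n if 0 ≤ n < s, and equals I^{[s]} I^{n-s} t^n if n ≥ s. -/

import Mathlib

open Polynomial

/-- Let `R` be a commutative ring and `I = (a₁,…,a_g)`.
Let `𝔞` be the ideal of the Rees algebra `R(I) ⊆ R[t]` generated by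
`a₁^s,…,a_g^s` and `a₁^s t^s,…,a_g^s t^s`. Then for every `n ≥ 0`, the
intersection of `𝔞` with the degree-`n` component `Iⁿ tⁿ` equals
`I^{[s]} Iⁿ tⁿ` if `0 ≤ n < s`, and `I^{[s]} I^{n-s} tⁿ` if `n ≥ s`: an element
`r tⁿ` (with `r ∈ Iⁿ`) of the degree-`n` component lies in `𝔞` iff
`r ∈ I^{[s]} Iⁿ` (resp. `r ∈ I^{[s]} I^{n-s}`). Here `I^{[s]} = (a₁^s,…,a_g^s)`. -/
theorem stmt5 (R : Type*) [CommRing R] (g : ℕ) (a : Fin g → R) (I : Ideal R)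
    (hI : I = Ideal.span (Set.range a)) (s : ℕ) (hs : 1 ≤ s)
    (𝔞 : Ideal (reesAlgebra I))
    (h𝔞 : 𝔞 = Ideal.span {y : reesAlgebra I |
      (∃ i, (y : R[X]) = Polynomial.C (a i ^ s)) ∨
      (∃ i, (y : R[X]) = Polynomial.C (a i ^ s) * Polynomial.X ^ s)}) :
    ∀ (n : ℕ) (r : R) (hr : r ∈ I ^ n),
      (n < s →
        ((⟨Polynomial.monomial n r, reesAlgebra.monomial_mem.mpr hr⟩ : reesAlgebra I) ∈ 𝔞 ↔
          r ∈ Ideal.span (Set.range fun i => a i ^ s) * I ^ n)) ∧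
      (s ≤ n →
        ((⟨Polynomial.monomial n r, reesAlgebra.monomial_mem.mpr hr⟩ : reesAlgebra I) ∈ 𝔞 ↔
          r ∈ Ideal.span (Set.range fun i => a i ^ s) * I ^ (n - s))) := by
  set J : Ideal R := Ideal.span (Set.range fun i => a i ^ s) with hJ
  have haI : ∀ i, a i ∈ I := fun i => hI ▸ Ideal.subset_span ⟨i, rfl⟩
  have haJ : ∀ i, a i ^ s ∈ J := fun i => Ideal.subset_span ⟨i, rfl⟩
  -- transfer membership in 𝔞 along equality of underlying polynomials
  have key : ∀ (x : R[X]) (hx : x ∈ reesAlgebra I) (y : reesAlgebra I),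
      x = (y : R[X]) → y ∈ 𝔞 → (⟨x, hx⟩ : reesAlgebra I) ∈ 𝔞 := by
    intro x hx y h hy
    rw [show (⟨x, hx⟩ : reesAlgebra I) = y from Subtype.ext h]
    exact hy
  have hCmem : ∀ c : R, (C c : R[X]) ∈ reesAlgebra I := by
    intro c
    rw [mem_reesAlgebra_iff]
    intro k
    rw [coeff_C]
    rcases eq_or_ne k 0 with rfl | h
    · simp
    · rw [if_neg h]; simp
  have hXmem : ∀ i, (C (a i ^ s) * X ^ s : R[X]) ∈ reesAlgebra I := by
    intro i
    rw [mem_reesAlgebra_iff]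
    intro k
    rw [coeff_C_mul, coeff_X_pow]
    rcases eq_or_ne k s with h | h
    · rw [if_pos h, h]
      simpa using Ideal.pow_mem_pow (haI i) s
    · rw [if_neg h]; simp
  -- forward direction: coefficients of elements of 𝔞
  have fwd : ∀ x : reesAlgebra I, x ∈ 𝔞 →
      ∀ m : ℕ, (x : R[X]).coeff m ∈ J * I ^ (if m < s then m else m - s) := by
    intro x hx
    rw [h𝔞] at hx
    induction hx using Submodule.span_induction with
    | mem y hy =>
      intro m
      rcases hy with ⟨i, hi⟩ | ⟨i, hi⟩
      · rw [hi, coeff_C]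
        rcases eq_or_ne m 0 with rfl | hm0
        · rw [if_pos rfl, if_pos (by omega : (0:ℕ) < s)]
          simpa using haJ i
        · rw [if_neg hm0]
          exact zero_mem _
      · rw [hi, coeff_C_mul, coeff_X_pow]
        rcases eq_or_ne m s with hms | hms
        · rw [if_pos hms, hms, if_neg (lt_irrefl s), Nat.sub_self]
          simpa using haJ i
        · rw [if_neg hms]
          simp
    | zero => intro m; simp
    | add y z _ _ hy hz =>
      intro m
      have : ((y + z : reesAlgebra I) : R[X]).coeff m
          = (y : R[X]).coeff m + (z : R[X]).coeff m := by
        push_cast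
        rw [coeff_add]
      rw [this]
      exact add_mem (hy m) (hz m)
    | smul z y _ hy =>
      intro m
      rw [smul_eq_mul]
      have hcoe : ((z * y : reesAlgebra I) : R[X]) = (z : R[X]) * (y : R[X]) := rfl
      rw [hcoe, coeff_mul]
      refine Submodule.sum_mem _ ?_
      rintro ⟨i, j⟩ hij
      rw [Finset.HasAntidiagonal.mem_antidiagonal] at hij
      have h1 : (z : R[X]).coeff i ∈ I ^ i := (mem_reesAlgebra_iff I _).mp z.2 i
      have h2 : (y : R[X]).coeff j ∈ J * I ^ (if j < s then j else j - s) := hy j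
      have h3 : (z : R[X]).coeff i * (y : R[X]).coeff j
          ∈ I ^ i * (J * I ^ (if j < s then j else j - s)) := Ideal.mul_mem_mul h1 h2
      have h4 : I ^ i * (J * I ^ (if j < s then j else j - s))
          ≤ J * I ^ (if m < s then m else m - s) := by
        have heq : I ^ i * (J * I ^ (if j < s then j else j - s))
            = J * I ^ (i + (if j < s then j else j - s)) := by
          rw [pow_add]; ring
        rw [heq]
        refine Ideal.mul_mono_right (Ideal.pow_le_pow_right ?_)
        split <;> split <;> omega
      exact h4 h3
  -- backward direction
  have bwd : ∀ (m : ℕ) (r : R), r ∈ J * I ^ (if m < s then m else m - s) →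
      ∃ h : (monomial m r : R[X]) ∈ reesAlgebra I,
        (⟨monomial m r, h⟩ : reesAlgebra I) ∈ 𝔞 := by
    intro m r hrm
    refine Submodule.mul_induction_on (C := fun r => ∃ h : (monomial m r : R[X]) ∈ reesAlgebra I,
        (⟨monomial m r, h⟩ : reesAlgebra I) ∈ 𝔞) hrm ?_ ?_
    · intro x hx b hb
      induction hx using Submodule.span_induction with
      | mem y hy =>
        obtain ⟨i, rfl⟩ := hy
        by_cases hm : m < s
        · rw [if_pos hm] at hb
          have hb' : (monomial m b : R[X]) ∈ reesAlgebra I :=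
            reesAlgebra.monomial_mem.mpr hb
          have hval : (monomial m (a i ^ s * b) : R[X])
              = ((⟨C (a i ^ s), hCmem _⟩ * ⟨monomial m b, hb'⟩ : reesAlgebra I) : R[X]) := by
            push_cast
            rw [C_mul_monomial]
          have hmem : (monomial m (a i ^ s * b) : R[X]) ∈ reesAlgebra I := by
            rw [hval]; exact Subtype.property _
          refine ⟨hmem, ?_⟩
          refine key _ _ _ hval ?_
          refine Ideal.mul_mem_right _ _ ?_
          rw [h𝔞]
          exact Ideal.subset_span (Or.inl ⟨i, rfl⟩)
        · rw [if_neg hm] at hb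
          have hb' : (monomial (m - s) b : R[X]) ∈ reesAlgebra I :=
            reesAlgebra.monomial_mem.mpr hb
          have hval : (monomial m (a i ^ s * b) : R[X])
              = ((⟨C (a i ^ s) * X ^ s, hXmem i⟩ * ⟨monomial (m - s) b, hb'⟩ :
                reesAlgebra I) : R[X]) := by
            push_cast
            rw [X_pow_eq_monomial, mul_assoc, monomial_mul_monomial, one_mul,
              C_mul_monomial, show s + (m - s) = m from by omega]
          have hmem : (monomial m (a i ^ s * b) : R[X]) ∈ reesAlgebra I := by
            rw [hval]; exact Subtype.property _
          refine ⟨hmem, ?_⟩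
          refine key _ _ _ hval ?_
          refine Ideal.mul_mem_right _ _ ?_
          rw [h𝔞]
          exact Ideal.subset_span (Or.inr ⟨i, rfl⟩)
      | zero =>
        refine ⟨by simp only [zero_mul, map_zero]; exact zero_mem _, ?_⟩
        refine key _ _ 0 (by simp) (zero_mem _)
      | add x y _ _ hx hy =>
        obtain ⟨h1, m1⟩ := hx
        obtain ⟨h2, m2⟩ := hy
        have hval : (monomial m ((x + y) * b) : R[X])
            = ((⟨monomial m (x * b), h1⟩ + ⟨monomial m (y * b), h2⟩ :
              reesAlgebra I) : R[X]) := by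
          push_cast
          rw [add_mul, map_add]
        have hmem : (monomial m ((x + y) * b) : R[X]) ∈ reesAlgebra I := by
          rw [hval]; exact Subtype.property _
        exact ⟨hmem, key _ _ _ hval (add_mem m1 m2)⟩
      | smul c x _ hx =>
        obtain ⟨h1, m1⟩ := hx
        have hval : (monomial m ((c • x) * b) : R[X])
            = ((⟨C c, hCmem c⟩ * ⟨monomial m (x * b), h1⟩ : reesAlgebra I) : R[X]) := by
          push_cast
          rw [C_mul_monomial, smul_eq_mul, mul_assoc]
        have hmem : (monomial m ((c • x) * b) : R[X]) ∈ reesAlgebra I := by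
          rw [hval]; exact Subtype.property _
        exact ⟨hmem, key _ _ _ hval (Ideal.mul_mem_left _ _ m1)⟩
    · intro x y hx hy
      obtain ⟨h1, m1⟩ := hx
      obtain ⟨h2, m2⟩ := hy
      have hval : (monomial m (x + y) : R[X])
          = ((⟨monomial m x, h1⟩ + ⟨monomial m y, h2⟩ : reesAlgebra I) : R[X]) := by
        push_cast
        rw [map_add]
      have hmem : (monomial m (x + y) : R[X]) ∈ reesAlgebra I := by
        rw [hval]; exact Subtype.property _
      exact ⟨hmem, key _ _ _ hval (add_mem m1 m2)⟩
  intro n r hr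
  constructor
  · intro hn
    constructor
    · intro hmem
      have := fwd _ hmem n
      simpa [coeff_monomial, if_pos hn] using this
    · intro hrmem
      obtain ⟨h, hm⟩ := bwd n r (by rw [if_pos hn]; exact hrmem)
      exact key _ _ _ rfl hm
  · intro hn
    constructor
    · intro hmem
      have := fwd _ hmem n
      simpa [coeff_monomial, if_neg (Nat.not_lt.mpr hn)] using this
    · intro hrmem
      obtain ⟨h, hm⟩ := bwd n r (by rw [if_neg (Nat.not_lt.mpr hn)]; exact hrmem)
      exact key _ _ _ rfl hm
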